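/- For any two probability density functions p and q on a measure space, the expectation under p of the absolute value of log(p/q) is bounded above by the Kullback-Leibler divergence d_KL(p,q) = ∫ p log(p/q) plus 2/e. -/

import Mathlib

open MeasureTheory Real

lemma aux_mul_log_inv_le {t : ℝ} (ht : 0 < t) :
    t * Real.log t⁻¹ ≤ (Real.exp 1)⁻¹ := by
  have he : (0:ℝ) < Real.exp 1 := Real.exp_pos 1
  have h1 : Real.log ((t * Real.exp 1)⁻¹) ≤ (t * Real.exp 1)⁻¹ - 1 :=
    Real.log_le_sub_one_of_pos (by positivity)
  have h2 : Real.log ((t * Real.exp 1)⁻¹) = Real.log t⁻¹ - 1 := by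
    rw [Real.log_inv, Real.log_mul (ne_of_gt ht) (ne_of_gt he), Real.log_exp,
      Real.log_inv]
    ring
  have h3 : Real.log t⁻¹ ≤ (t * Real.exp 1)⁻¹ := by
    rw [h2] at h1; linarith
  calc t * Real.log t⁻¹ ≤ t * (t * Real.exp 1)⁻¹ :=
        mul_le_mul_of_nonneg_left h3 ht.le
    _ = (Real.exp 1)⁻¹ := by field_simp

/-- For any two probability density functions `p` and `q` (w.r.t. a measure `μ`),
with `p` absolutely continuous w.r.t. `q`, the expectation under `p` of `|log (p/q)|`
is bounded by the KL divergence `∫ log (p/q) p dμ` plus `2/e`. -/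
theorem expectation_abs_log_ratio_le_klDiv_add
    {X : Type*} [MeasurableSpace X] (μ : Measure X) (p q : X → ℝ)
    (hp0 : ∀ x, 0 ≤ p x) (hq0 : ∀ x, 0 ≤ q x)
    (hp1 : ∫ x, p x ∂μ = 1) (hq1 : ∫ x, q x ∂μ = 1)
    (hac : ∀ x, p x ≠ 0 → q x ≠ 0)
    (hint : Integrable (fun x => |Real.log (p x / q x)| * p x) μ) :
    ∫ x, |Real.log (p x / q x)| * p x ∂μ ≤
      (∫ x, Real.log (p x / q x) * p x ∂μ) + 2 / Real.exp 1 := by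
  have he : (0:ℝ) < Real.exp 1 := Real.exp_pos 1
  -- p and q are integrable
  have hp_int : Integrable p μ := by
    by_contra h
    rw [integral_undef h] at hp1
    norm_num at hp1
  have hq_int : Integrable q μ := by
    by_contra h
    rw [integral_undef h] at hq1
    norm_num at hq1
  have hpm : AEMeasurable p μ := hp_int.aemeasurable
  have hqm : AEMeasurable q μ := hq_int.aemeasurable
  have hlm : AEMeasurable (fun x => Real.log (p x / q x)) μ :=
    Real.measurable_log.comp_aemeasurable (hpm.div hqm)
  -- integrability of log(p/q) * p
  have h1 : Integrable (fun x => Real.log (p x / q x) * p x) μ := by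
    refine hint.mono' (hlm.mul hpm).aestronglyMeasurable ?_
    filter_upwards with x
    rw [Real.norm_eq_abs, abs_mul, abs_of_nonneg (hp0 x)]
  -- pointwise inequality
  have hpt : ∀ x, |Real.log (p x / q x)| * p x - Real.log (p x / q x) * p x ≤
      2 / Real.exp 1 * q x := by
    intro x
    rcases eq_or_lt_of_le (hp0 x) with hp | hp
    · simp only [← hp, mul_zero, sub_zero]
      exact mul_nonneg (by positivity) (hq0 x)
    · have hq : 0 < q x := lt_of_le_of_ne (hq0 x) (Ne.symm (hac x (ne_of_gt hp)))
      set r := p x / q x with hr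
      have hr0 : 0 < r := div_pos hp hq
      rcases le_or_gt 1 r with h | h
      · rw [abs_of_nonneg (Real.log_nonneg h), sub_self]
        positivity
      · have hL : Real.log r < 0 := Real.log_neg hr0 h
        rw [abs_of_neg hL]
        have hpe : p x = r * q x := by rw [hr]; field_simp
        have key : r * Real.log r⁻¹ ≤ (Real.exp 1)⁻¹ := aux_mul_log_inv_le hr0
        have : -Real.log r * p x - Real.log r * p x = 2 * ((r * Real.log r⁻¹) * q x) := by
          rw [hpe, Real.log_inv]; ring
        rw [this]
        have : (r * Real.log r⁻¹) * q x ≤ (Real.exp 1)⁻¹ * q x :=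
          mul_le_mul_of_nonneg_right key hq.le
        rw [div_eq_mul_inv]
        nlinarith
  -- integrate
  have key : ∫ x, (|Real.log (p x / q x)| * p x - Real.log (p x / q x) * p x) ∂μ ≤
      ∫ x, 2 / Real.exp 1 * q x ∂μ :=
    integral_mono (hint.sub h1) (hq_int.const_mul _) hpt
  rw [integral_sub hint h1, integral_const_mul, hq1, mul_one] at key
  linarith
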